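/- Let m ≥ 2, let Ω ⊂ ℝ^m be a bounded open set whose boundary Γ is d-summable for some m−1 < d < m, let 0 < α < 1, and let f : Ω → ℝ_{0,m} be a measurable function satisfying |f(x)| ≤ c·dist(x,Γ)^{α−1} for almost every x ∈ Ω, where c > 0 is a constant. Then ∫_Ω |f(x)|^p dx < ∞ for p = (m−d)/(1−α); i.e., f ∈ L^p(Ω, ℝ_{0,m}). -/

import Mathlib

open MeasureTheory Metric Filter ENNReal

noncomputable section

/-- The negative-definite quadratic form `x ↦ -‖x‖²` on `ℝ^m`. -/
def Qneg (m : ℕ) : QuadraticForm ℝ (EuclideanSpace ℝ (Fin m)) :=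
  - LinearMap.BilinMap.toQuadraticMap (innerₗ (EuclideanSpace ℝ (Fin m)) : LinearMap.BilinForm ℝ (EuclideanSpace ℝ (Fin m)))

/-- The real Clifford algebra `ℝ_{0,m}`. -/
abbrev Cl (m : ℕ) := CliffordAlgebra (Qneg m)

/-- Embedding of a vector of `ℝ^m` into the Clifford algebra. -/
abbrev clv {m : ℕ} (v : EuclideanSpace ℝ (Fin m)) : Cl m := CliffordAlgebra.ι (Qneg m) v

/-- `x_ψ = Σ_i x_i ψ^i ∈ ℝ_{0,m}`. -/
def clPsi {m : ℕ} (ψ : Fin m → EuclideanSpace ℝ (Fin m)) (x : EuclideanSpace ℝ (Fin m)) : Cl m :=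
  clv (∑ i, x i • ψ i)

/-- Surface area of the unit sphere of ℝ^m. -/
def sigma (m : ℕ) : ℝ := m * (volume (ball (0 : EuclideanSpace ℝ (Fin m)) 1)).toReal

variable {m : ℕ} [NormedAddCommGroup (Cl m)] [NormedSpace ℝ (Cl m)]

/-- Partial derivative ∂u/∂x_i. -/
def pd (i : Fin m) (u : EuclideanSpace ℝ (Fin m) → Cl m) (x : EuclideanSpace ℝ (Fin m)) : Cl m :=
  fderiv ℝ u x (EuclideanSpace.single i 1)

/-- The generalized (ψ-)Dirac operator `ψ∂u = Σ_i ψ^i · ∂u/∂x_i`. -/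
def dirac (ψ : Fin m → EuclideanSpace ℝ (Fin m)) (u : EuclideanSpace ℝ (Fin m) → Cl m)
    (x : EuclideanSpace ℝ (Fin m)) : Cl m :=
  ∑ i, clv (ψ i) * pd i u x

/-- The componentwise Laplacian. -/
def lap (u : EuclideanSpace ℝ (Fin m) → Cl m) (x : EuclideanSpace ℝ (Fin m)) : Cl m :=
  ∑ i, pd i (pd i u) x

/-- The Cauchy kernel `K_ψ(x) = -x_ψ/(σ_m |x|^m)`. -/
def Kpsi (ψ : Fin m → EuclideanSpace ℝ (Fin m)) (x : EuclideanSpace ℝ (Fin m)) : Cl m :=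
  (-(sigma m * ‖x‖ ^ m)⁻¹) • clPsi ψ x

/-- The kernel `K_{φψ}`. -/
def Kphipsi (φ ψ : Fin m → EuclideanSpace ℝ (Fin m)) (x : EuclideanSpace ℝ (Fin m)) : Cl m :=
  (2 * sigma m * (2 - (m : ℝ)))⁻¹ •
    (((2 - (m : ℝ)) * ‖x‖ ^ (-(m : ℝ))) • (clPsi ψ x * clPsi φ x)
      + (‖x‖ ^ ((2 : ℝ) - m)) • ∑ i, clv (ψ i) * clv (φ i))

/-- The Teodorescu transform `T_ψ v`. -/
def Tpsi (ψ : Fin m → EuclideanSpace ℝ (Fin m)) (Ω : Set (EuclideanSpace ℝ (Fin m)))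
    (v : EuclideanSpace ℝ (Fin m) → Cl m) (x : EuclideanSpace ℝ (Fin m)) : Cl m :=
  - ∫ y in Ω, Kpsi ψ (y - x) * v y

/-- The second order Teodorescu transform `T_{φψ} v`. -/
def Tphipsi (φ ψ : Fin m → EuclideanSpace ℝ (Fin m)) (Ω : Set (EuclideanSpace ℝ (Fin m)))
    (v : EuclideanSpace ℝ (Fin m) → Cl m) (x : EuclideanSpace ℝ (Fin m)) : Cl m :=
  - ∫ y in Ω, Kphipsi φ ψ (y - x) * v y

/-- Minimal number of closed balls of radius τ needed to cover Γ. -/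
def coverNum {m : ℕ} (Γ : Set (EuclideanSpace ℝ (Fin m))) (τ : ℝ) : ℕ :=
  sInf {n : ℕ | ∃ s : Finset (EuclideanSpace ℝ (Fin m)), s.card = n ∧
    Γ ⊆ ⋃ c ∈ s, closedBall c τ}

/-- `Γ` is `d`-summable: `∫₀¹ N_Γ(τ) τ^{d-1} dτ` converges. -/
def dSummable {m : ℕ} (Γ : Set (EuclideanSpace ℝ (Fin m))) (d : ℝ) : Prop :=
  IntegrableOn (fun τ : ℝ => (coverNum Γ τ : ℝ) * τ ^ (d - 1)) (Set.Ioo 0 1)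

lemma coverNum_spec {m : ℕ} {Γ : Set (EuclideanSpace ℝ (Fin m))} (hΓ : IsCompact Γ)
    {τ : ℝ} (hτ : 0 < τ) :
    ∃ s : Finset (EuclideanSpace ℝ (Fin m)), s.card = coverNum Γ τ ∧
      Γ ⊆ ⋃ c ∈ s, closedBall c τ := by
  have hne : {n : ℕ | ∃ s : Finset (EuclideanSpace ℝ (Fin m)), s.card = n ∧
      Γ ⊆ ⋃ c ∈ s, closedBall c τ}.Nonempty := by
    obtain ⟨t, htf, hcov⟩ := totallyBounded_iff.mp hΓ.totallyBounded τ hτ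
    refine ⟨htf.toFinset.card, htf.toFinset, rfl, hcov.trans ?_⟩
    intro x hx
    simp only [Set.mem_iUnion, Set.Finite.mem_toFinset, Finset.mem_coe] at *
    obtain ⟨y, hy, h⟩ := hx
    exact ⟨y, hy, ball_subset_closedBall h⟩
  exact Nat.sInf_mem hne

lemma coverNum_anti {m : ℕ} {Γ : Set (EuclideanSpace ℝ (Fin m))} (hΓ : IsCompact Γ)
    {τ τ' : ℝ} (hτ : 0 < τ) (h : τ ≤ τ') : coverNum Γ τ' ≤ coverNum Γ τ := by
  obtain ⟨s, hcard, hcov⟩ := coverNum_spec hΓ hτ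
  exact Nat.sInf_le ⟨s, hcard, hcov.trans (Set.iUnion₂_mono fun c _ =>
    closedBall_subset_closedBall h)⟩

lemma key_lintegral {m : ℕ} (hm : 2 ≤ m) (Ω : Set (EuclideanSpace ℝ (Fin m)))
    (hΩo : IsOpen Ω) (hΩb : Bornology.IsBounded Ω)
    {d : ℝ} (hd1 : (m : ℝ) - 1 < d) (hd2 : d < m)
    (hsum : dSummable (frontier Ω) d) :
    ∫⁻ x in Ω, ENNReal.ofReal (infDist x (frontier Ω) ^ (d - (m : ℝ))) ∂volume < ⊤ := by
  rcases Set.eq_empty_or_nonempty Ω with hΩe | hΩne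
  · simp [hΩe]
  have hm1 : (1 : ℝ) ≤ (m : ℝ) - 1 := by
    have : (2 : ℝ) ≤ (m : ℝ) := by exact_mod_cast hm
    linarith
  set Γ := frontier Ω with hΓdef
  have hΓc : IsClosed Γ := isClosed_frontier
  have hΓb : Bornology.IsBounded Γ :=
    (Metric.isBounded_closure_iff.mpr hΩb).subset frontier_subset_closure
  have hΓcomp : IsCompact Γ := isCompact_of_isClosed_isBounded hΓc hΓb
  have hΓne : Γ.Nonempty := by
    rw [Set.nonempty_iff_ne_empty]
    intro h
    have hcl : IsClopen Ω := isClopen_iff_frontier_eq_empty.mpr h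
    rcases isClopen_iff.mp hcl with h' | h'
    · exact hΩne.ne_empty h'
    · haveI : Nonempty (Fin m) := ⟨⟨0, by omega⟩⟩
      exact NormedSpace.unbounded_univ ℝ (EuclideanSpace ℝ (Fin m)) (h' ▸ hΩb)
  have hgcont : Continuous fun x : EuclideanSpace ℝ (Fin m) => infDist x Γ :=
    continuous_infDist_pt Γ
  have hpos : ∀ x ∈ Ω, 0 < infDist x Γ := by
    intro x hx
    rw [← hΓc.notMem_iff_infDist_pos hΓne]
    intro hxΓ
    rw [hΓdef, hΩo.frontier_eq] at hxΓ
    exact hxΓ.2 hx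
  have hdm : d - (m : ℝ) ≤ 0 := by linarith
  set ρ : ℕ → ℝ := fun k => (2 : ℝ)⁻¹ ^ k with hρdef
  have hρpos : ∀ k, 0 < ρ k := fun k => pow_pos (by norm_num) k
  have hρs : ∀ k, ρ k = 2 * ρ (k + 1) := fun k => by
    simp only [hρdef, pow_succ]; ring
  have hρ0 : ρ 0 = 1 := by simp [hρdef]
  have hρanti : ∀ {i j : ℕ}, i ≤ j → ρ j ≤ ρ i := fun h =>
    pow_le_pow_of_le_one (by norm_num) (by norm_num) h
  have hρ1 : ∀ k, ρ k ≤ 1 := fun k => hρ0 ▸ hρanti (Nat.zero_le k)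
  set A : ℕ → Set (EuclideanSpace ℝ (Fin m)) :=
    fun k => Ω ∩ (fun x => infDist x Γ) ⁻¹' Set.Ico (ρ (k + 1)) (ρ k) with hAdef
  set B : Set (EuclideanSpace ℝ (Fin m)) :=
    Ω ∩ (fun x => infDist x Γ) ⁻¹' Set.Ici 1 with hBdef
  have hAm : ∀ k, MeasurableSet (A k) := fun k =>
    hΩo.measurableSet.inter (hgcont.measurable measurableSet_Ico)
  have hBm : MeasurableSet B := hΩo.measurableSet.inter (hgcont.measurable measurableSet_Ici)
  -- covering of Ω by B and the layers
  have hcover : Ω ⊆ B ∪ ⋃ k, A k := by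
    intro x hx
    by_cases h1 : 1 ≤ infDist x Γ
    · exact Or.inl ⟨hx, h1⟩
    right
    push_neg at h1
    have hex : ∃ n, ρ n ≤ infDist x Γ := by
      have ht : Tendsto ρ atTop (nhds 0) :=
        tendsto_pow_atTop_nhds_zero_of_lt_one (by norm_num) (by norm_num)
      obtain ⟨n, hn⟩ := (ht.eventually_lt_const (hpos x hx)).exists
      exact ⟨n, hn.le⟩
    obtain ⟨k, hk⟩ := Nat.exists_eq_succ_of_ne_zero (n := Nat.find hex) (by
      intro h0
      have := Nat.find_spec hex
      rw [h0, hρ0] at this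
      linarith)
    refine Set.mem_iUnion.mpr ⟨k, hx, ?_, ?_⟩
    · have := Nat.find_spec hex; rwa [hk] at this
    · have := Nat.find_min hex (m := k) (by omega)
      push_neg at this; exact this
  -- Ω has finite volume
  obtain ⟨R, hR⟩ := hΩb.subset_closedBall 0
  have hΩfin : volume Ω < ⊤ :=
    lt_of_le_of_lt (measure_mono hR) (isCompact_closedBall 0 R).measure_lt_top
  -- the part where infDist ≥ 1
  have hB : ∫⁻ x in B, ENNReal.ofReal (infDist x Γ ^ (d - (m : ℝ))) ∂volume < ⊤ := by
    have hle : ∫⁻ x in B, ENNReal.ofReal (infDist x Γ ^ (d - (m : ℝ))) ∂volume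
        ≤ ∫⁻ _ in B, (1 : ℝ≥0∞) ∂volume := by
      refine setLIntegral_mono' hBm fun x hx => ?_
      exact ENNReal.ofReal_le_one.mpr (Real.rpow_le_one_of_one_le_of_nonpos hx.2 hdm)
    refine lt_of_le_of_lt hle ?_
    rw [setLIntegral_const, one_mul]
    exact lt_of_le_of_lt (measure_mono Set.inter_subset_left) hΩfin
  set V : ℝ≥0∞ := volume (ball (0 : EuclideanSpace ℝ (Fin m)) 1) with hVdef
  have hVfin : V < ⊤ := measure_ball_lt_top
  set C : ℝ≥0∞ := ENNReal.ofReal ((2 : ℝ) ^ (2 * m)) * V with hCdef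
  have hCfin : C < ⊤ := ENNReal.mul_lt_top ENNReal.ofReal_lt_top hVfin
  -- the layer estimate
  have hterm : ∀ k, ∫⁻ x in A k, ENNReal.ofReal (infDist x Γ ^ (d - (m : ℝ))) ∂volume
      ≤ C * ∫⁻ τ in Set.Ioc (ρ (k + 1)) (ρ k),
          ENNReal.ofReal ((coverNum Γ τ : ℝ) * τ ^ (d - 1)) ∂volume := by
    intro k
    set a : ℝ := ρ (k + 1) with hadef
    have hapos : 0 < a := hρpos (k + 1)
    obtain ⟨s, hscard, hscov⟩ := coverNum_spec hΓcomp (hρpos k)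
    set N : ℕ := coverNum Γ (ρ k) with hNdef
    have hAsub : A k ⊆ ⋃ c ∈ s, closedBall c (2 * ρ k) := by
      intro x hx
      obtain ⟨y, hyΓ, hxy⟩ := (infDist_lt_iff hΓne).mp hx.2.2
      obtain ⟨c, hcs, hyc⟩ := Set.mem_iUnion₂.mp (hscov hyΓ)
      refine Set.mem_iUnion₂.mpr ⟨c, hcs, ?_⟩
      rw [mem_closedBall] at *
      calc dist x c ≤ dist x y + dist y c := dist_triangle x y c
        _ ≤ ρ k + ρ k := add_le_add hxy.le hyc
        _ = 2 * ρ k := by ring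
    have hvol : volume (A k) ≤ (N : ℝ≥0∞) * (ENNReal.ofReal ((2 * ρ k) ^ m) * V) := by
      calc volume (A k) ≤ volume (⋃ c ∈ s, closedBall c (2 * ρ k)) := measure_mono hAsub
        _ ≤ ∑ c ∈ s, volume (closedBall c (2 * ρ k)) := measure_biUnion_finset_le s _
        _ = ∑ c ∈ s, ENNReal.ofReal ((2 * ρ k) ^ m) * V := by
            refine Finset.sum_congr rfl fun c _ => ?_
            rw [Measure.addHaar_closedBall volume c (by positivity)]
            congr 2
            rw [finrank_euclideanSpace_fin]
        _ = (N : ℝ≥0∞) * (ENNReal.ofReal ((2 * ρ k) ^ m) * V) := by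
            rw [Finset.sum_const, hscard, nsmul_eq_mul]
    have hptwise : ∫⁻ x in A k, ENNReal.ofReal (infDist x Γ ^ (d - (m : ℝ))) ∂volume
        ≤ ENNReal.ofReal (a ^ (d - (m : ℝ))) * volume (A k) := by
      have hle : ∫⁻ x in A k, ENNReal.ofReal (infDist x Γ ^ (d - (m : ℝ))) ∂volume
          ≤ ∫⁻ _ in A k, ENNReal.ofReal (a ^ (d - (m : ℝ))) ∂volume := by
        refine setLIntegral_mono' (hAm k) fun x hx => ENNReal.ofReal_le_ofReal ?_
        exact Real.rpow_le_rpow_of_nonpos hapos hx.2.1 hdm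
      rwa [setLIntegral_const] at hle
    have hreal : a ^ (d - (m : ℝ)) * (2 * ρ k) ^ m
        = (2 : ℝ) ^ (2 * m) * (a ^ (d - 1) * a) := by
      have h1 : (2 * ρ k) ^ m = (2 : ℝ) ^ (2 * m) * a ^ m := by
        rw [hρs k, ← hadef, show (2 : ℝ) * (2 * a) = 2 ^ 2 * a by ring, mul_pow, ← pow_mul]
      calc a ^ (d - (m : ℝ)) * (2 * ρ k) ^ m
          = (2 : ℝ) ^ (2 * m) * (a ^ (d - (m : ℝ)) * a ^ ((m : ℕ) : ℝ)) := by
            rw [h1, Real.rpow_natCast]; ring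
        _ = (2 : ℝ) ^ (2 * m) * a ^ d := by
            rw [← Real.rpow_add hapos, show d - (m : ℝ) + ((m : ℕ) : ℝ) = d by push_cast; ring]
        _ = (2 : ℝ) ^ (2 * m) * (a ^ (d - 1) * a) := by
            rw [← Real.rpow_add_one hapos.ne', show d - 1 + 1 = d by ring]
    calc ∫⁻ x in A k, ENNReal.ofReal (infDist x Γ ^ (d - (m : ℝ))) ∂volume
        ≤ ENNReal.ofReal (a ^ (d - (m : ℝ))) * volume (A k) := hptwise
      _ ≤ ENNReal.ofReal (a ^ (d - (m : ℝ))) *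
            ((N : ℝ≥0∞) * (ENNReal.ofReal ((2 * ρ k) ^ m) * V)) := mul_le_mul_right hvol _
      _ = (N : ℝ≥0∞) * ENNReal.ofReal (a ^ (d - (m : ℝ)) * (2 * ρ k) ^ m) * V := by
          rw [ENNReal.ofReal_mul (Real.rpow_nonneg hapos.le _)]; ring
      _ = C * (ENNReal.ofReal ((N : ℝ) * a ^ (d - 1)) * ENNReal.ofReal a) := by
          rw [hreal, ENNReal.ofReal_mul (by positivity : (0 : ℝ) ≤ (2 : ℝ) ^ (2 * m)),
            ENNReal.ofReal_mul (by positivity : (0 : ℝ) ≤ a ^ (d - 1)),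
            ENNReal.ofReal_mul (by positivity : (0 : ℝ) ≤ (N : ℝ)),
            ← ENNReal.ofReal_natCast N, hCdef]
          ring
      _ = C * (ENNReal.ofReal ((N : ℝ) * a ^ (d - 1)) * volume (Set.Ioc a (ρ k))) := by
          rw [Real.volume_Ioc, show ρ k - a = a by rw [hρs k, ← hadef]; ring]
      _ = C * ∫⁻ _ in Set.Ioc a (ρ k), ENNReal.ofReal ((N : ℝ) * a ^ (d - 1)) ∂volume := by
          rw [setLIntegral_const]
      _ ≤ C * ∫⁻ τ in Set.Ioc a (ρ k),
            ENNReal.ofReal ((coverNum Γ τ : ℝ) * τ ^ (d - 1)) ∂volume := by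
          refine mul_le_mul_right (setLIntegral_mono' measurableSet_Ioc
            fun τ hτ => ENNReal.ofReal_le_ofReal ?_) _
          have hτ0 : 0 < τ := hapos.trans hτ.1
          refine mul_le_mul ?_ ?_ (by positivity) (by positivity)
          · exact_mod_cast coverNum_anti hΓcomp hτ0 hτ.2
          · exact Real.rpow_le_rpow hapos.le hτ.1.le (by linarith)
  -- splitting the integral
  have hsplit : ∫⁻ x in Ω, ENNReal.ofReal (infDist x Γ ^ (d - (m : ℝ))) ∂volume
      ≤ (∫⁻ x in B, ENNReal.ofReal (infDist x Γ ^ (d - (m : ℝ))) ∂volume)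
        + ∑' k, ∫⁻ x in A k, ENNReal.ofReal (infDist x Γ ^ (d - (m : ℝ))) ∂volume := by
    calc ∫⁻ x in Ω, ENNReal.ofReal (infDist x Γ ^ (d - (m : ℝ))) ∂volume
        ≤ ∫⁻ x in B ∪ ⋃ k, A k, ENNReal.ofReal (infDist x Γ ^ (d - (m : ℝ))) ∂volume :=
          lintegral_mono_set hcover
      _ ≤ (∫⁻ x in B, ENNReal.ofReal (infDist x Γ ^ (d - (m : ℝ))) ∂volume)
            + ∫⁻ x in ⋃ k, A k, ENNReal.ofReal (infDist x Γ ^ (d - (m : ℝ))) ∂volume := by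
          have h := lintegral_mono' (μ := volume.restrict (B ∪ ⋃ k, A k))
            (ν := volume.restrict B + volume.restrict (⋃ k, A k))
            (Measure.restrict_union_le B (⋃ k, A k))
            (le_refl fun x => ENNReal.ofReal (infDist x Γ ^ (d - (m : ℝ))))
          rwa [lintegral_add_measure] at h
      _ ≤ _ := add_le_add le_rfl (lintegral_iUnion_le _ _)
  -- disjointness of the parameter intervals
  have hIdisj : Pairwise (Function.onFun Disjoint fun k => Set.Ioc (ρ (k + 1)) (ρ k)) := by
    have key : ∀ {i j : ℕ}, i < j →
        Disjoint (Set.Ioc (ρ (i + 1)) (ρ i)) (Set.Ioc (ρ (j + 1)) (ρ j)) := by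
      intro i j hij
      rw [Set.disjoint_left]
      intro x h1 h2
      have : ρ j ≤ ρ (i + 1) := hρanti (by omega)
      have := h2.2.trans this
      exact absurd h1.1 (not_lt.mpr this)
    intro i j hij
    rcases hij.lt_or_gt with h | h
    · exact key h
    · exact (key h).symm
  have hIsub : (⋃ k, Set.Ioc (ρ (k + 1)) (ρ k)) ⊆ Set.Ioc 0 1 := by
    rintro x ⟨_, ⟨k, rfl⟩, hx⟩
    exact ⟨(hρpos (k + 1)).trans hx.1, hx.2.trans (hρ1 k)⟩
  have hintfin : ∫⁻ τ in Set.Ioc 0 1,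
      ENNReal.ofReal ((coverNum Γ τ : ℝ) * τ ^ (d - 1)) ∂volume < ⊤ := by
    rw [← MeasureTheory.restrict_Ioo_eq_restrict_Ioc]
    exact hsum.lintegral_lt_top
  have htsum : ∑' k, ∫⁻ x in A k, ENNReal.ofReal (infDist x Γ ^ (d - (m : ℝ))) ∂volume
      ≤ C * ∫⁻ τ in Set.Ioc 0 1, ENNReal.ofReal ((coverNum Γ τ : ℝ) * τ ^ (d - 1)) ∂volume := by
    calc ∑' k, ∫⁻ x in A k, ENNReal.ofReal (infDist x Γ ^ (d - (m : ℝ))) ∂volume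
        ≤ ∑' k, C * ∫⁻ τ in Set.Ioc (ρ (k + 1)) (ρ k),
            ENNReal.ofReal ((coverNum Γ τ : ℝ) * τ ^ (d - 1)) ∂volume :=
          ENNReal.tsum_le_tsum hterm
      _ = C * ∑' k, ∫⁻ τ in Set.Ioc (ρ (k + 1)) (ρ k),
            ENNReal.ofReal ((coverNum Γ τ : ℝ) * τ ^ (d - 1)) ∂volume := ENNReal.tsum_mul_left
      _ = C * ∫⁻ τ in ⋃ k, Set.Ioc (ρ (k + 1)) (ρ k),
            ENNReal.ofReal ((coverNum Γ τ : ℝ) * τ ^ (d - 1)) ∂volume := by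
          rw [lintegral_iUnion (fun k => measurableSet_Ioc) hIdisj]
      _ ≤ C * ∫⁻ τ in Set.Ioc 0 1,
            ENNReal.ofReal ((coverNum Γ τ : ℝ) * τ ^ (d - 1)) ∂volume :=
          mul_le_mul_right (lintegral_mono_set hIsub) _
  exact lt_of_le_of_lt hsplit (ENNReal.add_lt_top.mpr
    ⟨hB, lt_of_le_of_lt htsum (ENNReal.mul_lt_top hCfin hintfin)⟩)

lemma norm_rpow_bound_aux {m : ℕ} [NormedAddCommGroup (Cl m)]
    {Γ : Set (EuclideanSpace ℝ (Fin m))} {f : EuclideanSpace ℝ (Fin m) → Cl m}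
    {c p q : ℝ} (hc : 0 < c) (hp : 0 ≤ p) {x : EuclideanSpace ℝ (Fin m)}
    (hx : ‖f x‖ ≤ c * infDist x Γ ^ q) :
    ‖f x‖ ^ p ≤ c ^ p * infDist x Γ ^ (q * p) := by
  calc ‖f x‖ ^ p ≤ (c * infDist x Γ ^ q) ^ p :=
        Real.rpow_le_rpow (norm_nonneg _) hx hp
    _ = c ^ p * (infDist x Γ ^ q) ^ p :=
        Real.mul_rpow hc.le (Real.rpow_nonneg infDist_nonneg _)
    _ = c ^ p * infDist x Γ ^ (q * p) := by rw [← Real.rpow_mul infDist_nonneg]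

/-- if Γ = ∂Ω is d-summable (m-1 < d < m) and |f(x)| ≤ c·dist(x,Γ)^{α-1}
a.e. on Ω, then ∫_Ω |f|^p < ∞ for p = (m-d)/(1-α), i.e. f ∈ L^p(Ω). -/
theorem statement6 (m : ℕ) (hm : 2 ≤ m)
    [NormedAddCommGroup (Cl m)] [NormedSpace ℝ (Cl m)]
    (Ω : Set (EuclideanSpace ℝ (Fin m))) (hΩo : IsOpen Ω) (hΩb : Bornology.IsBounded Ω)
    (d : ℝ) (hd1 : (m : ℝ) - 1 < d) (hd2 : d < m)
    (hsum : dSummable (frontier Ω) d)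
    (α : ℝ) (hα0 : 0 < α) (hα1 : α < 1)
    (f : EuclideanSpace ℝ (Fin m) → Cl m)
    (hf : AEStronglyMeasurable f (volume.restrict Ω))
    (c : ℝ) (hc : 0 < c)
    (hbound : ∀ᵐ x ∂(volume.restrict Ω),
      ‖f x‖ ≤ c * infDist x (frontier Ω) ^ (α - 1)) :
    (∫⁻ x in Ω, ENNReal.ofReal (‖f x‖ ^ (((m : ℝ) - d) / (1 - α))) ∂volume) < ⊤
    ∧ MemLp f (ENNReal.ofReal (((m : ℝ) - d) / (1 - α))) (volume.restrict Ω) := by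
  set p : ℝ := ((m : ℝ) - d) / (1 - α) with hpdef
  have hp : 0 < p := div_pos (by linarith) (by linarith)
  have h1α : (1 : ℝ) - α ≠ 0 := ne_of_gt (by linarith)
  have hexp : (α - 1) * p = d - (m : ℝ) := by
    rw [hpdef]; field_simp; ring
  have hkey := key_lintegral hm Ω hΩo hΩb hd1 hd2 hsum
  have hptwise : ∀ᵐ x ∂(volume.restrict Ω),
      ENNReal.ofReal (‖f x‖ ^ p)
        ≤ ENNReal.ofReal (c ^ p) * ENNReal.ofReal (infDist x (frontier Ω) ^ (d - (m : ℝ))) := by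
    filter_upwards [hbound] with x hx
    rw [← ENNReal.ofReal_mul (by positivity)]
    refine ENNReal.ofReal_le_ofReal ?_
    have := norm_rpow_bound_aux (Γ := frontier Ω) hc hp.le hx
    rwa [hexp] at this
  have hlin : ∫⁻ x in Ω, ENNReal.ofReal (‖f x‖ ^ p) ∂volume < ⊤ := by
    calc ∫⁻ x in Ω, ENNReal.ofReal (‖f x‖ ^ p) ∂volume
        ≤ ∫⁻ x in Ω, ENNReal.ofReal (c ^ p)
            * ENNReal.ofReal (infDist x (frontier Ω) ^ (d - (m : ℝ))) ∂volume :=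
          lintegral_mono_ae hptwise
      _ = ENNReal.ofReal (c ^ p)
            * ∫⁻ x in Ω, ENNReal.ofReal (infDist x (frontier Ω) ^ (d - (m : ℝ))) ∂volume :=
          lintegral_const_mul' _ _ ENNReal.ofReal_ne_top
      _ < ⊤ := ENNReal.mul_lt_top ENNReal.ofReal_lt_top hkey
  refine ⟨hlin, hf, ?_⟩
  have hp0 : ENNReal.ofReal p ≠ 0 := (ENNReal.ofReal_pos.mpr hp).ne'
  rw [eLpNorm_eq_lintegral_rpow_enorm_toReal hp0 ENNReal.ofReal_ne_top]
  refine ENNReal.rpow_lt_top_of_nonneg (by positivity) ?_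
  rw [ENNReal.toReal_ofReal hp.le]
  have heq : ∀ x, (‖f x‖ₑ) ^ p = ENNReal.ofReal (‖f x‖ ^ p) := fun x => by
    rw [← ofReal_norm, ENNReal.ofReal_rpow_of_nonneg (norm_nonneg _) hp.le]
  simp_rw [heq]
  exact hlin.ne
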